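/- arXiv:2301.00367 — 2 statements merged into one kernel-verified Lean document; each statement's English description precedes it below -/
import Mathlib

section
/- (Countable saturation of ultraproducts) Let U be a countably incomplete ultrafilter on a set I, and for each k ∈ ℕ let Aₖ : I → Set(Ω) be a family of subsets of a set Ω such that for every n ∈ ℕ, the set {i ∈ I : ⋂_{k ≤ n} Aₖ(i) ≠ ∅} belongs to U. Then there exists a function g : I → Ω such that for every k ∈ ℕ, {i ∈ I : g(i) ∈ Aₖ(i)} ∈ U. -/
theorem stmt10 {I Ω : Type*} (U : Ultrafilter I)
    (hU : ∃ X : ℕ → Set I, X 0 = Set.univ ∧ (∀ n, X (n + 1) ⊆ X n) ∧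
      (∀ n, X n ∈ U) ∧ ⋂ n, X n = ∅)
    (A : ℕ → I → Set Ω)
    (h : ∀ n : ℕ, {i : I | (⋂ k ≤ n, A k i).Nonempty} ∈ U) :
    ∃ g : I → Ω, ∀ k : ℕ, {i : I | g i ∈ A k i} ∈ U := by
  classical
  obtain ⟨X, hX0, hXmono, hXU, hXempty⟩ := hU
  have hΩ : Nonempty Ω := by
    by_contra hc
    rw [not_nonempty_iff] at hc
    have h0 := h 0
    have heq : ({i : I | (⋂ k ≤ 0, A k i).Nonempty} : Set I) = ∅ := by
      ext i
      simp only [Set.mem_setOf_eq, Set.mem_empty_iff_false, iff_false]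
      rintro ⟨x, _⟩
      exact hc.false x
    rw [heq] at h0
    exact U.empty_notMem h0
  set Z : ℕ → Set I := fun n => X n ∩ {i | (⋂ k ≤ n, A k i).Nonempty} with hZdef
  have hZstep : ∀ n, Z (n + 1) ⊆ Z n := by
    intro n i hi
    refine ⟨hXmono n hi.1, ?_⟩
    obtain ⟨x, hx⟩ := hi.2
    refine ⟨x, ?_⟩
    simp only [Set.mem_iInter] at hx ⊢
    intro k hk
    exact hx k (hk.trans (Nat.le_succ n))
  have hZmono : ∀ {m n : ℕ}, m ≤ n → Z n ⊆ Z m := by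
    intro m n hmn
    induction hmn with
    | refl => exact fun _ h => h
    | step _ ih => exact fun i hi => ih (hZstep _ hi)
  have hZU : ∀ n, Z n ∈ U := fun n => Filter.inter_mem (hXU n) (h n)
  have hex : ∀ i : I, ∃ n, i ∉ Z n := by
    intro i
    by_contra hc
    push_neg at hc
    have : i ∈ ⋂ n, X n := Set.mem_iInter.2 fun n => (hc n).1
    rw [hXempty] at this
    exact this
  set N : I → ℕ := fun i => Nat.find (hex i) with hNdef
  set g : I → Ω := fun i =>
    if hi : (⋂ k ≤ N i - 1, A k i).Nonempty then hi.some else Classical.arbitrary Ω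
    with hgdef
  refine ⟨g, fun k => Filter.mem_of_superset (hZU k) ?_⟩
  intro i hik
  have hNk : k < N i := by
    rcases Nat.lt_or_ge k (N i) with hlt | hge
    · exact hlt
    · exact absurd (hZmono hge hik) (Nat.find_spec (hex i))
  have hNpos : 0 < N i := by omega
  have hmem : i ∈ Z (N i - 1) := by
    have hfind : Nat.find (hex i) = N i := rfl
    have := Nat.find_min (hex i) (m := N i - 1) (by omega)
    exact not_not.mp this
  have hne : (⋂ k ≤ N i - 1, A k i).Nonempty := hmem.2
  have hg : g i = hne.some := dif_pos hne
  have := hne.some_mem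
  simp only [Set.mem_iInter] at this
  show g i ∈ A k i
  rw [hg]
  exact this k (by omega)
end

section
/- (Loeb's key lemma in ultraproduct form) Let U be a nonprincipal ultrafilter on ℕ, Ω a set, and for each k ∈ ℕ let Aₖ : ℕ → Set(Ω) and A : ℕ → Set(Ω) be families of subsets. Suppose that for all k ≠ l, {i : Aₖ(i) ∩ Aₗ(i) = ∅} ∈ U, that for each k, {i : Aₖ(i) ⊆ A(i)} ∈ U, and that every function g : ℕ → Ω with {i : g(i) ∈ A(i)} ∈ U satisfies {i : g(i) ∈ Aₖ(i)} ∈ U for some k ∈ ℕ. Then there exists n ∈ ℕ such that every g with {i : g(i) ∈ A(i)} ∈ U satisfies {i : g(i) ∈ Aₖ(i)} ∈ U for some k ≤ n. -/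
open Classical in
theorem stmt12 {Ω : Type*} (U : Ultrafilter ℕ) (hU : ∀ n : ℕ, {n} ∉ U)
    (A : ℕ → ℕ → Set Ω) (A0 : ℕ → Set Ω)
    (hdisj : ∀ k l : ℕ, k ≠ l → {i : ℕ | A k i ∩ A l i = ∅} ∈ U)
    (hsub : ∀ k : ℕ, {i : ℕ | A k i ⊆ A0 i} ∈ U)
    (hcov : ∀ g : ℕ → Ω, {i : ℕ | g i ∈ A0 i} ∈ U →
      ∃ k : ℕ, {i : ℕ | g i ∈ A k i} ∈ U) :
    ∃ n : ℕ, ∀ g : ℕ → Ω, {i : ℕ | g i ∈ A0 i} ∈ U →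
      ∃ k ≤ n, {i : ℕ | g i ∈ A k i} ∈ U := by
  -- U contains all cofinite sets
  have hcof : ∀ s : Set ℕ, s.Finite → s ∉ U := by
    intro s hs hmem
    obtain ⟨a, -, ha⟩ := Ultrafilter.eq_pure_of_finite_mem hs hmem
    exact hU a (ha ▸ rfl)
  have hIci : ∀ k : ℕ, Set.Ici k ∈ U := by
    intro k
    by_contra h
    rw [← Ultrafilter.compl_mem_iff_notMem] at h
    exact hcof _ (Set.finite_Iio k) (by simpa using h)
  by_contra hcon
  push_neg at hcon
  choose g hg1 hg2 using hcon
  -- B n ∈ U : the set of i where g n behaves badly up to n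
  set B : ℕ → Set ℕ := fun n => {i | g n i ∈ A0 i ∧ ∀ k ≤ n, g n i ∉ A k i} with hB
  have hBmem : ∀ n, B n ∈ U := by
    intro n
    have h1 : {i | g n i ∈ A0 i} ∩ ⋂ k ∈ Set.Iic n, {i | g n i ∉ A k i} ∈ U := by
      apply Filter.inter_mem (hg1 n)
      rw [Filter.biInter_mem (Set.finite_Iic n)]
      intro k hk
      have := hg2 n k hk
      rw [← Ultrafilter.compl_mem_iff_notMem] at this
      exact this
    refine Filter.mem_of_superset h1 ?_
    intro i hi
    simp only [Set.mem_inter_iff, Set.mem_iInter, Set.mem_setOf_eq] at hi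
    exact ⟨hi.1, fun k hk => hi.2 k hk⟩
  -- diagonal function
  set N : ℕ → ℕ := fun i => Nat.findGreatest (fun n => i ∈ B n) i with hN
  set G : ℕ → Ω := fun i => g (N i) i with hG
  have hG0 : {i | G i ∈ A0 i} ∈ U := by
    refine Filter.mem_of_superset (hBmem 0) ?_
    intro i hi
    have : i ∈ B (N i) := Nat.findGreatest_spec (P := fun n => i ∈ B n) (Nat.zero_le i) hi
    exact this.1
  obtain ⟨k, hk⟩ := hcov G hG0
  have hnot : {i | G i ∈ A k i}ᶜ ∈ U := by
    refine Filter.mem_of_superset (Filter.inter_mem (hBmem k) (hIci k)) ?_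
    rintro i ⟨hiB, hik⟩
    have hspec : i ∈ B (N i) := Nat.findGreatest_spec (P := fun n => i ∈ B n) hik hiB
    have hle : k ≤ N i := Nat.le_findGreatest (P := fun n => i ∈ B n) hik hiB
    exact hspec.2 k hle
  rw [Ultrafilter.compl_mem_iff_notMem] at hnot
  exact hnot hk
end
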